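/- (Zip cone of U(3), inert case) With ha_1 = (1,0,p), ha_2 = (1+p,1,p), ha_μ = (p+1,p+1,p^2+p), λ_det = (p+1,p+1,p+1) in Z^3, the cone Z≥0·ha_1 + Z≥0·ha_2 + Z≥0·ha_μ + Z·λ_det, taken with Q≥0-coefficients (and Q-coefficient on λ_det), equals {(λ_1,λ_2,λ_3) ∈ Q^3 : λ_1 ≥ λ_2 and (p−1)λ_1 + λ_2 − pλ_3 ≤ 0}. -/
import Mathlib


/-- Zip cone of `U(3)` in the inert case: the cone of combinations
`a·(1,0,p) + b·(1+p,1,p) + c·(p+1,p+1,p²+p) + d·(p+1,p+1,p+1)` with `a,b,c ∈ ℚ≥0`,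
`d ∈ ℚ`, equals `{(λ₁,λ₂,λ₃) ∈ ℚ³ : λ₁ ≥ λ₂ and (p−1)λ₁ + λ₂ − pλ₃ ≤ 0}`. -/
theorem stmt10 (p : ℤ) (hp : 2 ≤ p) :
    {x : Fin 3 → ℚ | ∃ a b c d : ℚ, 0 ≤ a ∧ 0 ≤ b ∧ 0 ≤ c ∧
      x = a • ![1, 0, (p : ℚ)] + b • ![1 + (p : ℚ), 1, (p : ℚ)]
        + c • ![(p : ℚ) + 1, (p : ℚ) + 1, (p : ℚ) ^ 2 + (p : ℚ)]
        + d • ![(p : ℚ) + 1, (p : ℚ) + 1, (p : ℚ) + 1]}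
    = {x : Fin 3 → ℚ | x 1 ≤ x 0 ∧ ((p : ℚ) - 1) * x 0 + x 1 - (p : ℚ) * x 2 ≤ 0} := by
  have hp1 : (1 : ℚ) < (p : ℚ) := by exact_mod_cast lt_of_lt_of_le one_lt_two hp
  have hp0 : (0 : ℚ) < (p : ℚ) := lt_trans one_pos hp1
  have hq : (0 : ℚ) < (p : ℚ) ^ 2 - 1 := by nlinarith
  ext x
  simp only [Set.mem_setOf_eq]
  constructor
  · rintro ⟨a, b, c, d, ha, hb, hc, rfl⟩
    simp only [Pi.add_apply, Pi.smul_apply, Matrix.cons_val_zero, Matrix.cons_val_one,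
      Matrix.head_cons, smul_eq_mul, Fin.isValue]
    have h2 : (![1, 0, (p : ℚ)] : Fin 3 → ℚ) 2 = (p : ℚ) := rfl
    have h2' : (![1 + (p : ℚ), 1, (p : ℚ)] : Fin 3 → ℚ) 2 = (p : ℚ) := rfl
    have h2'' : (![(p : ℚ) + 1, (p : ℚ) + 1, (p : ℚ) ^ 2 + (p : ℚ)] : Fin 3 → ℚ) 2
        = (p : ℚ) ^ 2 + (p : ℚ) := rfl
    have h2''' : (![(p : ℚ) + 1, (p : ℚ) + 1, (p : ℚ) + 1] : Fin 3 → ℚ) 2 = (p : ℚ) + 1 := rfl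
    rw [h2, h2', h2'', h2''']
    constructor
    · nlinarith
    · nlinarith [mul_nonneg hc hq.le, mul_nonneg (mul_nonneg hc hq.le) hp0.le,
        mul_nonneg ha (by nlinarith : (0:ℚ) ≤ (p:ℚ)^2 - (p:ℚ) + 1)]
  · rintro ⟨h1, h2⟩
    refine ⟨0, (x 0 - x 1) / p,
      ((p : ℚ) * x 2 - ((p : ℚ) - 1) * x 0 - x 1) / ((p : ℚ) * ((p : ℚ) ^ 2 - 1)),
      x 1 / ((p : ℚ) + 1) - (x 0 - x 1) / ((p : ℚ) * ((p : ℚ) + 1))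
        - ((p : ℚ) * x 2 - ((p : ℚ) - 1) * x 0 - x 1) / ((p : ℚ) * ((p : ℚ) ^ 2 - 1)),
      le_refl 0, ?_, ?_, ?_⟩
    · exact div_nonneg (by linarith) hp0.le
    · exact div_nonneg (by linarith) (mul_nonneg hp0.le hq.le)
    · funext i
      fin_cases i <;>
      · simp only [show ((⟨0, by norm_num⟩ : Fin 3) = 0) from rfl,
          show ((⟨1, by norm_num⟩ : Fin 3) = 1) from rfl,
          show ((⟨2, by norm_num⟩ : Fin 3) = 2) from rfl,
          Pi.add_apply, Pi.smul_apply, Matrix.cons_val_zero, Matrix.cons_val_one,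
          Matrix.head_cons, Matrix.cons_val_two, Matrix.tail_cons, smul_eq_mul, Fin.isValue]
        field_simp
        ring
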